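/- Suppose G satisfies Condition (C): for all g, h ∈ G with h of infinite order and integers k, l, g h^k g^{-1} = h^l implies |k| = |l|. Let C ≤ G be infinite cyclic. Then N_G[C] = ⋃_{k≥1} N_G(k!C), where N_G[C] = {g ∈ G | gCg^{-1} ∩ C is infinite}, and k!C = {h^{k!} | h ∈ C}. -/

import Mathlib

/-- Condition (C). -/
def ConditionC (G : Type*) [Group G] : Prop :=
  ∀ g h : G, (∀ n : ℤ, n ≠ 0 → h ^ n ≠ 1) →
    ∀ k l : ℤ, g * h ^ k * g⁻¹ = h ^ l → |k| = |l|

/-- A subgroup is infinite cyclic if it is generated by an element of infinite order. -/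
def IsInfiniteCyclic {G : Type*} [Group G] (C : Subgroup G) : Prop :=
  ∃ g : G, (∀ n : ℤ, n ≠ 0 → g ^ n ≠ 1) ∧ C = Subgroup.zpowers g

/-- The subgroup `k!C = {h^{k!} | h ∈ C}` of a subgroup `C` (as generated set). -/
def factPow {G : Type*} [Group G] (C : Subgroup G) (k : ℕ) : Subgroup G :=
  Subgroup.closure {x : G | ∃ h ∈ C, x = h ^ Nat.factorial k}

lemma factPow_zpowers {G : Type*} [Group G] (c : G) (k : ℕ) :
    factPow (Subgroup.zpowers c) k = Subgroup.zpowers (c ^ Nat.factorial k) := by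
  apply le_antisymm
  · apply Subgroup.closure_le _ |>.mpr
    rintro x ⟨h, hh, rfl⟩
    obtain ⟨n, rfl⟩ := Subgroup.mem_zpowers_iff.mp hh
    refine Subgroup.mem_zpowers_iff.mpr ⟨n, ?_⟩
    rw [← zpow_natCast (c ^ n) (Nat.factorial k), ← zpow_natCast c (Nat.factorial k),
      ← zpow_mul, ← zpow_mul, mul_comm]
  · rw [Subgroup.zpowers_le]
    exact Subgroup.subset_closure ⟨c, Subgroup.mem_zpowers c, rfl⟩

lemma mem_normalizer_zpowers {G : Type*} [Group G] {g d : G}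
    (h : g * d * g⁻¹ = d ∨ g * d * g⁻¹ = d⁻¹) :
    g ∈ Subgroup.normalizer (Subgroup.zpowers d : Set G) := by
  rw [Subgroup.mem_normalizer_iff]
  have h' : g⁻¹ * d * g = d ∨ g⁻¹ * d * g = d⁻¹ := by
    rcases h with h | h
    · left
      have := congrArg (fun x => g⁻¹ * x * g) h
      simpa [mul_assoc] using this.symm
    · right
      have := congrArg (fun x => g⁻¹ * x⁻¹ * g) h
      simpa [mul_assoc] using this.symm
  intro x
  constructor
  · intro hxmem
    obtain ⟨t, rfl⟩ := Subgroup.mem_zpowers_iff.mp hxmem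
    rcases h with h | h
    · refine Subgroup.mem_zpowers_iff.mpr ⟨t, ?_⟩
      rw [← conj_zpow, h]
    · refine Subgroup.mem_zpowers_iff.mpr ⟨-t, ?_⟩
      rw [← conj_zpow, h, inv_zpow, zpow_neg]
  · intro hxmem
    obtain ⟨t, ht⟩ := Subgroup.mem_zpowers_iff.mp hxmem
    have hx : x = g⁻¹ * d ^ t * g := by
      have := congrArg (fun y => g⁻¹ * y * g) ht
      simpa [mul_assoc] using this.symm
    have hginv : g⁻¹ * d ^ t * g = g⁻¹ * d ^ t * g⁻¹⁻¹ := by rw [inv_inv]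
    rcases h' with h' | h'
    · refine Subgroup.mem_zpowers_iff.mpr ⟨t, ?_⟩
      rw [hx, hginv, ← conj_zpow]
      rw [show g⁻¹ * d * g⁻¹⁻¹ = d by rw [inv_inv]; exact h']
    · refine Subgroup.mem_zpowers_iff.mpr ⟨-t, ?_⟩
      rw [hx, hginv, ← conj_zpow]
      rw [show g⁻¹ * d * g⁻¹⁻¹ = d⁻¹ by rw [inv_inv]; exact h', inv_zpow, zpow_neg]

theorem stmt14 {G : Type*} [Group G] (hCC : ConditionC G)
    (C : Subgroup G) (hC : IsInfiniteCyclic C) (g : G) :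
    ((Subgroup.map (MulAut.conj g).toMonoidHom C ⊓ C : Subgroup G) : Set G).Infinite ↔
      ∃ k : ℕ, 1 ≤ k ∧ g ∈ Subgroup.normalizer (factPow C k : Set G) := by
  obtain ⟨c, hc, rfl⟩ := hC
  constructor
  · intro hinf
    obtain ⟨x, hx⟩ := (hinf.diff (Set.finite_singleton 1)).nonempty
    obtain ⟨⟨hx1, hx2⟩, hxne⟩ := hx
    have hxne : x ≠ 1 := hxne
    obtain ⟨y, hy, hconj⟩ := Subgroup.mem_map.mp hx1
    obtain ⟨m, rfl⟩ := Subgroup.mem_zpowers_iff.mp hy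
    obtain ⟨k, rfl⟩ := Subgroup.mem_zpowers_iff.mp hx2
    have hconj : g * c ^ m * g⁻¹ = c ^ k := by simpa [MulAut.conj_apply] using hconj
    have hm : m ≠ 0 := by
      rintro rfl
      simp at hconj
      exact hxne hconj.symm
    have habs : |m| = |k| := hCC g c hc m k hconj
    set n := m.natAbs with hn
    have hn1 : 1 ≤ n := Nat.one_le_iff_ne_zero.mpr (Int.natAbs_ne_zero.mpr hm)
    refine ⟨n, hn1, ?_⟩
    rw [factPow_zpowers]
    -- m divides n!
    have hdvd : m ∣ (Nat.factorial n : ℤ) := by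
      rw [← Int.natAbs_dvd]
      exact_mod_cast Nat.dvd_factorial hn1 le_rfl
    obtain ⟨s, hs⟩ := hdvd
    have hconj2 : g * c ^ ((Nat.factorial n : ℤ)) * g⁻¹ = c ^ (k * s) := by
      rw [hs, zpow_mul, ← conj_zpow, hconj, ← zpow_mul]
    have habs2 : |k * s| = (Nat.factorial n : ℤ) := by
      rw [abs_mul, ← habs, ← abs_mul, ← hs, abs_of_nonneg (by positivity)]
    have hcases : k * s = (Nat.factorial n : ℤ) ∨ k * s = -(Nat.factorial n : ℤ) :=
      (abs_eq (by positivity)).mp habs2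
    apply mem_normalizer_zpowers
    rcases hcases with hcase | hcase
    · left
      rw [← zpow_natCast c (Nat.factorial n), hconj2, hcase]
    · right
      rw [← zpow_natCast c (Nat.factorial n), hconj2, hcase, zpow_neg]
  · rintro ⟨k, hk1, hmem⟩
    rw [factPow_zpowers] at hmem
    set d := c ^ Nat.factorial k with hd
    have hdfin : ¬IsOfFinOrder d := by
      rw [isOfFinOrder_iff_pow_eq_one]
      rintro ⟨n, hn, hpow⟩
      refine hc ((Nat.factorial k : ℤ) * n) ?_ ?_
      · have : (Nat.factorial k : ℤ) ≠ 0 := by positivity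
        exact mul_ne_zero this (by exact_mod_cast hn.ne')
      · rw [zpow_mul, zpow_natCast, zpow_natCast]
        exact hpow
    have hinfd : (Subgroup.zpowers d : Set G).Infinite := infinite_zpowers.mpr hdfin
    refine hinfd.mono ?_
    intro x hx
    obtain ⟨t, rfl⟩ := Subgroup.mem_zpowers_iff.mp hx
    refine Subgroup.mem_inf.mpr ⟨?_, ?_⟩
    · have hginv : g⁻¹ ∈ Subgroup.normalizer (Subgroup.zpowers d : Set G) :=
        (Subgroup.normalizer (Subgroup.zpowers d : Set G)).inv_mem hmem
      have h1 : g⁻¹ * d ^ t * g⁻¹⁻¹ ∈ Subgroup.zpowers d :=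
        (Subgroup.mem_normalizer_iff.mp hginv (d ^ t)).mp hx
      have h2 : g⁻¹ * d ^ t * g⁻¹⁻¹ ∈ Subgroup.zpowers c := by
        refine Subgroup.zpowers_le.mpr ?_ h1
        exact (Subgroup.zpowers c).pow_mem (Subgroup.mem_zpowers c) _
      refine Subgroup.mem_map.mpr ⟨g⁻¹ * d ^ t * g⁻¹⁻¹, h2, ?_⟩
      simp [MulAut.conj_apply, mul_assoc]
    · refine Subgroup.zpowers_le.mpr ?_ hx
      exact (Subgroup.zpowers c).pow_mem (Subgroup.mem_zpowers c) _
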